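/- Let g : [0,∞) → [0,∞) be an integrable, nonincreasing function with g(0) well defined, and suppose there exists λ > 0 such that for almost every t ≥ 0, λ ∫_t^∞ g(τ) dτ ≤ g(t). Then there exists a constant C depending only on λ such that for almost every t ≥ 0, g(t) ≤ C g(0) e^{-λ t}. -/

import Mathlib

open MeasureTheory Set

/-- A Gronwall-type lemma: if `g : [0,∞) → [0,∞)` is integrable, nonincreasing and satisfies
`λ ∫_t^∞ g ≤ g(t)` for a.e. `t ≥ 0`, then `g(t) ≤ C g(0) e^{-λ t}` for a.e. `t ≥ 0`,
with `C` depending only on `λ`. -/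
theorem stmt0 (lam : ℝ) (hlam : 0 < lam) :
    ∃ C : ℝ, 0 < C ∧ ∀ g : ℝ → ℝ,
      (∀ t, 0 ≤ g t) →
      IntegrableOn g (Ici 0) →
      AntitoneOn g (Ici 0) →
      (∀ᵐ t ∂(volume.restrict (Ici (0:ℝ))), lam * ∫ τ in Ioi t, g τ ≤ g t) →
      ∀ᵐ t ∂(volume.restrict (Ici (0:ℝ))), g t ≤ C * g 0 * Real.exp (-lam * t) := by
  refine ⟨2 * Real.exp 1, by positivity, ?_⟩
  intro g hg hint hanti hae
  set F : ℝ → ℝ := fun t => ∫ τ in Ioi t, g τ with hF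
  -- basic integrability facts
  have hIoiInt : ∀ t : ℝ, 0 ≤ t → IntegrableOn g (Ioi t) := fun t ht =>
    hint.mono_set (fun x hx => le_trans ht (le_of_lt hx))
  have hIocInt : ∀ s t : ℝ, 0 ≤ s → IntegrableOn g (Ioc s t) := fun s t hs =>
    hint.mono_set (fun x hx => le_trans hs (le_of_lt hx.1))
  have hFnn : ∀ t : ℝ, 0 ≤ F t := fun t =>
    setIntegral_nonneg measurableSet_Ioi fun τ _ => hg τ
  -- splitting
  have hsplit : ∀ s t : ℝ, 0 ≤ s → s ≤ t → F s = (∫ τ in Ioc s t, g τ) + F t := by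
    intro s t hs hst
    have := setIntegral_union (Ioc_disjoint_Ioi (le_refl t)) measurableSet_Ioi
      (hIocInt s t hs) (hIoiInt t (hs.trans hst)) (f := g) (μ := volume)
    rw [Ioc_union_Ioi_eq_Ioi hst] at this
    exact this
  have hmono : ∀ s t : ℝ, 0 ≤ s → s ≤ t → F t ≤ F s := by
    intro s t hs hst
    rw [hsplit s t hs hst]
    have : 0 ≤ ∫ τ in Ioc s t, g τ :=
      setIntegral_nonneg measurableSet_Ioc fun τ _ => hg τ
    linarith
  -- lower bound of the chunk integral
  have hchunk : ∀ s t : ℝ, 0 ≤ s → s ≤ t → lam * F t * (t - s) ≤ ∫ τ in Ioc s t, g τ := by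
    intro s t hs hst
    have hsub : Ioc s t ⊆ Ici (0:ℝ) := fun x hx => le_trans hs (le_of_lt hx.1)
    have hae' : ∀ᵐ τ ∂(volume.restrict (Ioc s t)), lam * F τ ≤ g τ :=
      ae_restrict_of_ae_restrict_of_subset hsub hae
    have hae'' : ∀ᵐ τ ∂(volume.restrict (Ioc s t)), lam * F t ≤ g τ := by
      filter_upwards [hae', ae_restrict_mem measurableSet_Ioc] with τ h1 h2
      have : F t ≤ F τ := hmono τ t (le_trans hs (le_of_lt h2.1)) h2.2
      nlinarith
    have hconst : Integrable (fun _ : ℝ => lam * F t) (volume.restrict (Ioc s t)) := by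
      refine integrableOn_const ?_
      simp [Real.volume_Ioc]
    have := integral_mono_ae hconst (hIocInt s t hs) hae''
    rwa [setIntegral_const, Real.volume_real_Ioc_of_le hst,
      smul_eq_mul, mul_comm (t - s)] at this
  -- one-step inequality
  have hstep : ∀ s t : ℝ, 0 ≤ s → s ≤ t → F t * (1 + lam * (t - s)) ≤ F s := by
    intro s t hs hst
    have h1 := hchunk s t hs hst
    have h2 := hsplit s t hs hst
    nlinarith
  -- iterated inequality
  have hiter : ∀ (h : ℝ), 0 ≤ h → ∀ n : ℕ, F (n * h) * (1 + lam * h) ^ n ≤ F 0 := by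
    intro h hh n
    induction n with
    | zero => simp
    | succ n ih =>
      have h1 : (0:ℝ) ≤ (n : ℝ) * h := by positivity
      have h2 : (n : ℝ) * h ≤ (n + 1 : ℕ) * h := by
        push_cast; nlinarith
      have hstep' := hstep ((n:ℝ) * h) ((n + 1 : ℕ) * h) h1 h2
      have hd : ((n + 1 : ℕ) : ℝ) * h - (n : ℝ) * h = h := by push_cast; ring
      rw [hd] at hstep'
      have hpow : (0:ℝ) ≤ (1 + lam * h) ^ n := by positivity
      calc F ((n + 1 : ℕ) * h) * (1 + lam * h) ^ (n + 1)
          = (F ((n + 1 : ℕ) * h) * (1 + lam * h)) * (1 + lam * h) ^ n := by ring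
        _ ≤ F ((n:ℝ) * h) * (1 + lam * h) ^ n := by
            exact mul_le_mul_of_nonneg_right hstep' hpow
        _ ≤ F 0 := ih
  -- exponential decay of F
  have hdecay : ∀ t : ℝ, 0 ≤ t → F t * Real.exp (lam * t) ≤ F 0 := by
    intro t ht
    have htend : Filter.Tendsto (fun n : ℕ => F t * (1 + (lam * t) / (n : ℝ)) ^ n)
        Filter.atTop (nhds (F t * Real.exp (lam * t))) :=
      (Real.tendsto_one_add_div_pow_exp (lam * t)).const_mul (F t)
    refine le_of_tendsto htend ?_
    filter_upwards [Filter.eventually_ge_atTop 1] with n hn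
    have hn0 : (n : ℝ) ≠ 0 := by positivity
    have hh : (0:ℝ) ≤ t / n := by positivity
    have := hiter (t / n) hh n
    have heq : (n : ℝ) * (t / n) = t := by field_simp
    rw [heq] at this
    have heq2 : lam * (t / n) = lam * t / n := by ring
    rwa [heq2] at this
  -- pick t₀ ∈ (0, 1/lam] where the hypothesis holds
  have hδ : (0:ℝ) < 1 / lam := by positivity
  obtain ⟨t₀, ht₀mem, ht₀⟩ : ∃ t₀ ∈ Ioc (0:ℝ) (1 / lam), lam * F t₀ ≤ g t₀ := by
    by_contra hcon
    push_neg at hcon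
    have hsub : Ioc (0:ℝ) (1/lam) ⊆ {t | ¬ (lam * F t ≤ g t)} := fun t ht =>
      (hcon t ht).not_ge
    have h0 : (volume.restrict (Ici (0:ℝ))) {t | ¬ (lam * F t ≤ g t)} = 0 := hae
    have hle := measure_mono (μ := volume.restrict (Ici (0:ℝ))) hsub
    rw [h0, Measure.restrict_apply' measurableSet_Ici] at hle
    have : Ioc (0:ℝ) (1/lam) ∩ Ici 0 = Ioc 0 (1/lam) :=
      inter_eq_left.2 (fun x hx => le_of_lt hx.1)
    rw [this, Real.volume_Ioc] at hle
    simp only [nonpos_iff_eq_zero] at hle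
    rw [ENNReal.ofReal_eq_zero] at hle
    linarith
  -- bound on F 0
  have hg0 : ∀ t : ℝ, 0 ≤ t → g t ≤ g 0 := fun t ht => hanti self_mem_Ici ht ht
  have hF0 : F 0 ≤ 2 * g 0 / lam := by
    have h1 : F t₀ ≤ g 0 / lam := by
      have : lam * F t₀ ≤ g 0 := ht₀.trans (hg0 t₀ ht₀mem.1.le)
      rw [le_div_iff₀ hlam]; linarith [this]
    have h2 : (∫ τ in Ioc 0 t₀, g τ) ≤ t₀ * g 0 := by
      have hconst : Integrable (fun _ : ℝ => g 0) (volume.restrict (Ioc (0:ℝ) t₀)) := by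
        refine integrableOn_const ?_
        simp [Real.volume_Ioc]
      have hle : ∀ᵐ τ ∂(volume.restrict (Ioc (0:ℝ) t₀)), g τ ≤ g 0 := by
        filter_upwards [ae_restrict_mem measurableSet_Ioc] with τ hτ
        exact hg0 τ hτ.1.le
      have := integral_mono_ae (hIocInt 0 t₀ le_rfl) hconst hle
      rwa [setIntegral_const, Real.volume_real_Ioc_of_le ht₀mem.1.le, sub_zero,
        smul_eq_mul] at this
    have h3 := hsplit 0 t₀ le_rfl ht₀mem.1.le
    have ht₀le : t₀ ≤ 1 / lam := ht₀mem.2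
    have : t₀ * g 0 ≤ (1/lam) * g 0 := mul_le_mul_of_nonneg_right ht₀le (hg 0)
    rw [h3]
    have : g 0 / lam = (1/lam) * g 0 := by ring
    have h7 : t₀ * g 0 ≤ g 0 / lam := by
      rw [le_div_iff₀ hlam]
      have h8 : t₀ * lam ≤ 1 := (le_div_iff₀ hlam).mp ht₀le
      nlinarith [hg 0]
    have h9 : 2 * g 0 / lam = g 0 / lam + g 0 / lam := by ring
    linarith
  -- conclusion, pointwise on Ici 0
  refine (ae_restrict_iff' measurableSet_Ici).2 (Filter.Eventually.of_forall ?_)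
  intro t ht
  simp only [mem_Ici] at ht
  have hexp : (0:ℝ) < Real.exp (-lam * t) := Real.exp_pos _
  rcases le_or_gt t (1/lam) with hcase | hcase
  · -- small t
    have h1 : Real.exp 1 * Real.exp (-lam * t) = Real.exp (1 - lam * t) := by
      rw [← Real.exp_add]; ring_nf
    have h2 : (1:ℝ) ≤ Real.exp (1 - lam * t) := by
      apply Real.one_le_exp
      rw [le_div_iff₀ hlam] at hcase
      nlinarith
    have := hg0 t ht
    calc g t ≤ g 0 := this
      _ = g 0 * 1 := by ring
      _ ≤ g 0 * (2 * Real.exp (1 - lam * t)) := by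
          apply mul_le_mul_of_nonneg_left _ (hg 0)
          nlinarith
      _ = 2 * Real.exp 1 * g 0 * Real.exp (-lam * t) := by rw [← h1]; ring
  · -- large t
    set s := t - 1/lam with hs
    have hs0 : 0 ≤ s := by rw [hs]; linarith
    have hst : s ≤ t := by rw [hs]; linarith
    -- g t * (1/lam) ≤ ∫ over Ioc s t
    have h1 : g t * (1/lam) ≤ ∫ τ in Ioc s t, g τ := by
      have hconst : Integrable (fun _ : ℝ => g t) (volume.restrict (Ioc s t)) := by
        refine integrableOn_const ?_
        simp [Real.volume_Ioc]
      have hle : ∀ᵐ τ ∂(volume.restrict (Ioc s t)), g t ≤ g τ := by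
        filter_upwards [ae_restrict_mem measurableSet_Ioc] with τ hτ
        exact hanti (le_trans hs0 hτ.1.le) ht hτ.2
      have := integral_mono_ae hconst (hIocInt s t hs0) hle
      rwa [setIntegral_const, Real.volume_real_Ioc_of_le hst,
        smul_eq_mul, show t - s = 1/lam by
          rw [hs]; ring, mul_comm (1/lam)] at this
    have h2 : (∫ τ in Ioc s t, g τ) ≤ F s := by
      have h3 := hsplit s t hs0 hst
      have := hFnn t
      linarith
    have h4 : F s ≤ F 0 * Real.exp (-lam * s) := by
      have hd := hdecay s hs0
      have he : Real.exp (-lam * s) = (Real.exp (lam * s))⁻¹ := by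
        rw [← Real.exp_neg]; ring_nf
      rw [he, ← div_eq_mul_inv, le_div_iff₀ (Real.exp_pos _)]
      exact hd
    have h5 : F 0 ≤ 2 * g 0 / lam := hF0
    have h6 : Real.exp (-lam * s) = Real.exp 1 * Real.exp (-lam * t) := by
      rw [← Real.exp_add]
      congr 1
      rw [hs, mul_sub, neg_mul lam (1 / lam), mul_one_div_cancel hlam.ne']
      ring
    have hgt : g t * (1/lam) ≤ (2 * g 0 / lam) * (Real.exp 1 * Real.exp (-lam * t)) := by
      calc g t * (1/lam) ≤ F s := h1.trans h2
        _ ≤ F 0 * Real.exp (-lam * s) := h4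
        _ ≤ (2 * g 0 / lam) * Real.exp (-lam * s) :=
            mul_le_mul_of_nonneg_right h5 (Real.exp_pos _).le
        _ = (2 * g 0 / lam) * (Real.exp 1 * Real.exp (-lam * t)) := by rw [h6]
    have hlam' : (0:ℝ) < 1/lam := hδ
    calc g t = (g t * (1/lam)) * lam := by field_simp
      _ ≤ ((2 * g 0 / lam) * (Real.exp 1 * Real.exp (-lam * t))) * lam :=
          mul_le_mul_of_nonneg_right hgt hlam.le
      _ = 2 * Real.exp 1 * g 0 * Real.exp (-lam * t) := by field_simp
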